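/- arXiv:2303.11081 — 2 statements merged into one kernel-verified Lean document; each statement's English description precedes it below -/
import Mathlib

section
/- One-step contraction of randomized block fixed-point iteration: let f : ℝ^d → ℝ^d be a γ-contraction (γ ∈ [0,1)) with fixed point x*. Partition the d coordinates into n blocks, and at each step choose a block uniformly at random and set x^{k+1} = (I − αM^k)x^k + αM^k f(x^k), where M^k is the diagonal projection onto the chosen block and α ∈ (0,1]. Then E[‖x^{k+1} − x*‖² | x^k] ≤ (1 − (α/n)(1 − γ²)) ‖x^k − x*‖². -/
lemma eucl_norm_sq' {d : ℕ} (z : EuclideanSpace ℝ (Fin d)) :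
    ‖z‖ ^ 2 = ∑ i, (z i) ^ 2 := by
  rw [EuclideanSpace.norm_eq, Real.sq_sqrt (by positivity)]
  simp [sq_abs]

/-- One-step contraction of the randomized block fixed-point iteration:
if `f` is a `γ`-contraction with fixed point `x*`, the coordinates `Fin d`
are partitioned into `n` nonempty blocks via the (surjective) block map `blk`,
and one block chosen uniformly at random is updated by a convex combination
with weight `α`, then the conditional expected squared distance to `x*`
contracts by the factor `1 − (α/n)(1 − γ²)`. -/
theorem block_fixed_point_one_step (d n : ℕ) (hn : 0 < n)
    (γ α : ℝ) (hγ0 : 0 ≤ γ) (hγ1 : γ < 1) (hα0 : 0 < α) (hα1 : α ≤ 1)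
    (f : EuclideanSpace ℝ (Fin d) → EuclideanSpace ℝ (Fin d))
    (hf : ∀ x y, ‖f x - f y‖ ≤ γ * ‖x - y‖)
    (xstar : EuclideanSpace ℝ (Fin d)) (hfix : f xstar = xstar)
    (blk : Fin d → Fin n) (hblk : Function.Surjective blk)
    (x : EuclideanSpace ℝ (Fin d)) :
    (n : ℝ)⁻¹ * ∑ j : Fin n,
        ‖(show EuclideanSpace ℝ (Fin d) from
            WithLp.toLp 2 (fun i => if blk i = j then (1 - α) * x i + α * f x i else x i))
            - xstar‖ ^ 2
      ≤ (1 - α / n * (1 - γ ^ 2)) * ‖x - xstar‖ ^ 2 := by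
  set w : EuclideanSpace ℝ (Fin d) := (1 - α) • (x - xstar) + α • (f x - xstar) with hw
  have hA : (0:ℝ) ≤ ‖x - xstar‖ := norm_nonneg _
  have hB : ‖f x - xstar‖ ≤ γ * ‖x - xstar‖ := by
    calc ‖f x - xstar‖ = ‖f x - f xstar‖ := by rw [hfix]
    _ ≤ γ * ‖x - xstar‖ := hf x xstar
  have hwle : ‖w‖ ≤ (1 - α) * ‖x - xstar‖ + α * (γ * ‖x - xstar‖) := by
    calc ‖w‖ ≤ ‖(1-α) • (x - xstar)‖ + ‖α • (f x - xstar)‖ := norm_add_le _ _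
    _ = (1-α) * ‖x - xstar‖ + α * ‖f x - xstar‖ := by
        rw [norm_smul, norm_smul, Real.norm_eq_abs, Real.norm_eq_abs,
          abs_of_nonneg (by linarith), abs_of_nonneg hα0.le]
    _ ≤ _ := by nlinarith [norm_nonneg (f x - xstar)]
  have hsum : ∑ j : Fin n, ‖(show EuclideanSpace ℝ (Fin d) from
      WithLp.toLp 2 (fun i => if blk i = j then (1 - α) * x i + α * f x i else x i)) - xstar‖ ^ 2
      = (n : ℝ) * ‖x - xstar‖ ^ 2 + (‖w‖ ^ 2 - ‖x - xstar‖ ^ 2) := by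
    have h1 : ∀ j : Fin n, ‖(show EuclideanSpace ℝ (Fin d) from
        WithLp.toLp 2 (fun i => if blk i = j then (1 - α) * x i + α * f x i else x i)) - xstar‖ ^ 2
        = ∑ i, ((x i - xstar i) ^ 2 +
            (if blk i = j then ((1-α)*x i + α*f x i - xstar i)^2 - (x i - xstar i)^2 else 0)) := by
      intro j
      rw [eucl_norm_sq']
      refine Finset.sum_congr rfl fun i _ => ?_
      have h : ((show EuclideanSpace ℝ (Fin d) from
          WithLp.toLp 2 (fun i => if blk i = j then (1 - α) * x i + α * f x i else x i)) - xstar) i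
          = (if blk i = j then (1 - α) * x i + α * f x i else x i) - xstar i := rfl
      rw [h]
      split <;> ring
    rw [Finset.sum_congr rfl fun j _ => h1 j]
    rw [Finset.sum_comm]
    have h2 : ∀ i : Fin d, ∑ j : Fin n, ((x i - xstar i) ^ 2 +
        (if blk i = j then ((1-α)*x i + α*f x i - xstar i)^2 - (x i - xstar i)^2 else 0))
        = (x i - xstar i)^2 * (n:ℝ) + ((w i)^2 - (x i - xstar i)^2) := by
      intro i
      rw [Finset.sum_add_distrib, Finset.sum_const, Finset.sum_ite_eq]
      have hwi : w i = (1-α)*(x i - xstar i) + α*(f x i - xstar i) := rfl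
      simp only [Finset.mem_univ, if_true, Finset.card_univ, Fintype.card_fin,
        nsmul_eq_mul, hwi]
      ring
    rw [Finset.sum_congr rfl fun i _ => h2 i, Finset.sum_add_distrib,
      ← Finset.sum_mul, Finset.sum_sub_distrib, ← eucl_norm_sq']
    have hxe : ∑ i, (x i - xstar i) ^ 2 = ‖x - xstar‖ ^ 2 := by rw [eucl_norm_sq']; rfl
    rw [hxe]
    ring
  rw [hsum]
  have hn' : (0:ℝ) < n := by exact_mod_cast hn
  rw [inv_mul_le_iff₀ hn']
  have hw2 : ‖w‖^2 ≤ ((1-α)*‖x-xstar‖ + α*(γ*‖x-xstar‖))^2 :=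
    pow_le_pow_left₀ (norm_nonneg _) hwle 2
  have hRHS : (n:ℝ) * ((1 - α / n * (1 - γ ^ 2)) * ‖x - xstar‖ ^ 2)
      = ((n:ℝ) - α * (1 - γ^2)) * ‖x - xstar‖^2 := by
    field_simp
  rw [hRHS]
  nlinarith [sq_nonneg ‖x - xstar‖,
    mul_nonneg (mul_nonneg (mul_nonneg hα0.le (sub_nonneg.2 hα1)) (sq_nonneg (1-γ)))
      (sq_nonneg ‖x - xstar‖)]
end

section
/- Averaged gradient norm bound for biased SGD: let f : ℝ^n → ℝ be continuously differentiable with γ-Lipschitz gradient, bounded below by f*, and run x^{k+1} = x^k − η d(x^k) for N steps with 0 < ηγ < 1. If E[‖Δ^k‖²] ≤ G₀ and |E[⟨∇f(x^k), Δ^k⟩]| ≤ ηG₀ + ρ^{k−1}G₀ for all k with some ρ ∈ (0,1), then (1/N) ∑_{k=1}^N E[‖∇f(x^k)‖²] ≤ (f(x^1) − f*)/(Nη(1 − ηγ/2)) + ηG₀ + G₀/((1−ρ)N) + ηγG₀/(2 − ηγ). -/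
open MeasureTheory Finset

/-- Descent lemma for functions with Lipschitz gradient. -/
lemma descent_lemma {n : ℕ} (f : EuclideanSpace ℝ (Fin n) → ℝ)
    (f' : EuclideanSpace ℝ (Fin n) → EuclideanSpace ℝ (Fin n))
    (hdiff : ∀ z, HasGradientAt f (f' z) z) (γ : ℝ) (hγ : 0 ≤ γ)
    (hlip : ∀ z w, ‖f' z - f' w‖ ≤ γ * ‖z - w‖)
    (x y : EuclideanSpace ℝ (Fin n)) :
    f y ≤ f x + inner ℝ (f' x) (y - x) + γ / 2 * ‖y - x‖ ^ 2 := by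
  set v := y - x with hv
  have hcontf' : Continuous f' := by
    have : LipschitzWith (Real.toNNReal γ) f' := by
      apply LipschitzWith.of_dist_le_mul
      intro a b
      rw [dist_eq_norm, dist_eq_norm]
      simpa [Real.coe_toNNReal γ hγ] using hlip a b
    exact this.continuous
  have hline : ∀ t : ℝ, HasDerivAt (fun t : ℝ => f (x + t • v))
      ((inner ℝ (f' (x + t • v)) v : ℝ)) t := by
    intro t
    have h1 : HasDerivAt (fun t : ℝ => x + t • v) v t := by
      simpa using ((hasDerivAt_id t).smul_const v).const_add x
    have h2 := (hdiff (x + t • v)).hasFDerivAt.comp_hasDerivAt t h1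
    exact h2
  have hcl : Continuous fun t : ℝ => x + t • v :=
    continuous_const.add (continuous_id.smul continuous_const)
  have hgc : Continuous fun t : ℝ => (inner ℝ (f' (x + t • v)) v : ℝ) :=
    (hcontf'.comp hcl).inner continuous_const
  have hFTC : ∫ t in (0:ℝ)..1, (inner ℝ (f' (x + t • v)) v : ℝ)
      = f (x + (1:ℝ) • v) - f (x + (0:ℝ) • v) :=
    intervalIntegral.integral_eq_sub_of_hasDerivAt (fun t _ => hline t)
      (hgc.intervalIntegrable 0 1)
  have hc2 : Continuous fun t : ℝ => (inner ℝ (f' x) v : ℝ) + γ * ‖v‖ ^ 2 * t := by fun_prop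
  have hc3 : Continuous fun t : ℝ => γ * ‖v‖ ^ 2 * t := by fun_prop
  have hbound : ∫ t in (0:ℝ)..1, (inner ℝ (f' (x + t • v)) v : ℝ)
      ≤ ∫ t in (0:ℝ)..1, ((inner ℝ (f' x) v : ℝ) + γ * ‖v‖ ^ 2 * t) := by
    apply intervalIntegral.integral_mono_on (by norm_num) (hgc.intervalIntegrable 0 1)
      (hc2.intervalIntegrable 0 1)
    intro t ht
    have hsub : (inner ℝ (f' (x + t • v)) v : ℝ) - (inner ℝ (f' x) v : ℝ)
        = (inner ℝ (f' (x + t • v) - f' x) v : ℝ) := (inner_sub_left _ _ _).symm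
    have h3 : (inner ℝ (f' (x + t • v) - f' x) v : ℝ) ≤ γ * ‖v‖ ^ 2 * t := by
      calc (inner ℝ (f' (x + t • v) - f' x) v : ℝ)
          ≤ ‖f' (x + t • v) - f' x‖ * ‖v‖ := real_inner_le_norm _ _
        _ ≤ (γ * ‖x + t • v - x‖) * ‖v‖ := by
            gcongr; exact hlip _ _
        _ = γ * ‖v‖ ^ 2 * t := by
            have : x + t • v - x = t • v := by abel
            rw [this, norm_smul, Real.norm_eq_abs, abs_of_nonneg ht.1]
            ring
    linarith
  have hval : ∫ t in (0:ℝ)..1, ((inner ℝ (f' x) v : ℝ) + γ * ‖v‖ ^ 2 * t)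
      = (inner ℝ (f' x) v : ℝ) + γ / 2 * ‖v‖ ^ 2 := by
    rw [intervalIntegral.integral_add (intervalIntegrable_const)
      (hc3.intervalIntegrable 0 1)]
    rw [intervalIntegral.integral_const, intervalIntegral.integral_const_mul, integral_id]
    norm_num; ring
  have h1v : x + (1:ℝ) • v = y := by simp [hv]
  have h0v : x + (0:ℝ) • v = x := by simp
  rw [h1v, h0v] at hFTC
  linarith [hbound.trans_eq hval, hFTC.symm.le, hFTC.le]


set_option maxHeartbeats 2000000 in
/-- Averaged gradient norm bound for biased SGD: under a `γ`-Lipschitz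
gradient, a lower bound `f*`, the update `x^{k+1} = x^k − η d(x^k)` with
`0 < ηγ < 1`, second-moment bound `E[‖Δ^k‖²] ≤ G₀` and bias bound
`|E[⟨∇f(x^k), Δ^k⟩]| ≤ ηG₀ + ρ^{k−1}G₀`, the average of `E[‖∇f(x^k)‖²]`
over `k = 1, …, N` is bounded by
`(f(x¹) − f*)/(Nη(1 − ηγ/2)) + ηG₀ + G₀/((1−ρ)N) + ηγG₀/(2 − ηγ)`. -/
theorem biased_sgd_averaged_gradient_bound {n : ℕ} {Ω : Type*} [MeasureSpace Ω]
    (μ : Measure Ω) [IsProbabilityMeasure μ]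
    (f : EuclideanSpace ℝ (Fin n) → ℝ)
    (f' : EuclideanSpace ℝ (Fin n) → EuclideanSpace ℝ (Fin n))
    (hdiff : ∀ z, HasGradientAt f (f' z) z)
    (γ : ℝ) (hγ : 0 < γ)
    (hlip : ∀ z w, ‖f' z - f' w‖ ≤ γ * ‖z - w‖)
    (fstar : ℝ) (hlb : ∀ z, fstar ≤ f z)
    (N : ℕ) (hN : 1 ≤ N)
    (η : ℝ) (hη0 : 0 < η) (hη1 : η * γ < 1)
    (x D : ℕ → Ω → EuclideanSpace ℝ (Fin n))
    (x1 : EuclideanSpace ℝ (Fin n)) (hx1 : ∀ ω, x 1 ω = x1)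
    (hupd : ∀ k, 1 ≤ k → ∀ ω, x (k + 1) ω = x k ω - η • D k ω)
    (G₀ : ℝ) (hG₀ : 0 < G₀) (ρ : ℝ) (hρ0 : 0 < ρ) (hρ1 : ρ < 1)
    (hint_f : ∀ k ∈ Icc 1 (N + 1), Integrable (fun ω => f (x k ω)) μ)
    (hint_grad : ∀ k ∈ Icc 1 N, Integrable (fun ω => ‖f' (x k ω)‖ ^ 2) μ)
    (hint_err : ∀ k ∈ Icc 1 N,
      Integrable (fun ω => ‖D k ω - f' (x k ω)‖ ^ 2) μ)
    (hint_inner : ∀ k ∈ Icc 1 N,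
      Integrable (fun ω => (inner ℝ (f' (x k ω)) (D k ω - f' (x k ω)) : ℝ)) μ)
    (hvar : ∀ k ∈ Icc 1 N, ∫ ω, ‖D k ω - f' (x k ω)‖ ^ 2 ∂μ ≤ G₀)
    (hbias : ∀ k ∈ Icc 1 N,
      |∫ ω, (inner ℝ (f' (x k ω)) (D k ω - f' (x k ω)) : ℝ) ∂μ|
        ≤ η * G₀ + ρ ^ (k - 1) * G₀) :
    (1 / (N : ℝ)) * ∑ k ∈ Icc 1 N, ∫ ω, ‖f' (x k ω)‖ ^ 2 ∂μ
      ≤ (f x1 - fstar) / ((N : ℝ) * η * (1 - η * γ / 2))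
        + η * G₀ + G₀ / ((1 - ρ) * (N : ℝ)) + η * γ * G₀ / (2 - η * γ) := by
  have hA : (0:ℝ) < 1 - η * γ / 2 := by linarith
  have hA1 : 1 - η * γ ≤ 1 - η * γ / 2 := by nlinarith
  have hηγ : 0 < 1 - η * γ := by linarith
  have hρ' : (0:ℝ) < 1 - ρ := by linarith
  have hNpos : (0:ℝ) < N := by exact_mod_cast hN
  set F : ℕ → ℝ := fun k => ∫ ω, f (x k ω) ∂μ with hF
  set Gq : ℕ → ℝ := fun k => ∫ ω, ‖f' (x k ω)‖ ^ 2 ∂μ with hGq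
  set I : ℕ → ℝ := fun k => ∫ ω, (inner ℝ (f' (x k ω)) (D k ω - f' (x k ω)) : ℝ) ∂μ with hI
  set V : ℕ → ℝ := fun k => ∫ ω, ‖D k ω - f' (x k ω)‖ ^ 2 ∂μ with hV
  -- per-step expected descent inequality
  have step : ∀ k ∈ Icc 1 N,
      η * (1 - η * γ / 2) * Gq k
        ≤ F k - F (k + 1) + η * (1 - η * γ) * (η * G₀ + ρ ^ (k - 1) * G₀)
          + γ * η ^ 2 / 2 * G₀ := by
    intro k hk
    rw [Finset.mem_Icc] at hk
    have hk1 : k ∈ Icc 1 N := Finset.mem_Icc.mpr hk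
    have hkN1 : k ∈ Icc 1 (N + 1) := Finset.mem_Icc.mpr ⟨hk.1, by omega⟩
    have hkN1' : k + 1 ∈ Icc 1 (N + 1) := Finset.mem_Icc.mpr ⟨by omega, by omega⟩
    -- pointwise inequality
    have hpt : ∀ ω, f (x (k + 1) ω)
        ≤ f (x k ω) - η * (1 - η * γ / 2) * ‖f' (x k ω)‖ ^ 2
          + (γ * η ^ 2 - η) * (inner ℝ (f' (x k ω)) (D k ω - f' (x k ω)) : ℝ)
          + γ * η ^ 2 / 2 * ‖D k ω - f' (x k ω)‖ ^ 2 := by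
      intro ω
      have hupd' := hupd k hk.1 ω
      have hdesc := descent_lemma f f' hdiff γ hγ.le hlip (x k ω) (x (k + 1) ω)
      rw [hupd'] at hdesc ⊢
      have hyx : x k ω - η • D k ω - x k ω = -(η • D k ω) := by abel
      rw [hyx] at hdesc
      set a := f' (x k ω)
      set b := D k ω
      have hinner : (inner ℝ a (-(η • b)) : ℝ) = -(η * inner ℝ a b) := by
        rw [inner_neg_right, real_inner_smul_right]
      have hnorm : ‖-(η • b)‖ ^ 2 = η ^ 2 * ‖b‖ ^ 2 := by
        rw [norm_neg, norm_smul, Real.norm_eq_abs, mul_pow, sq_abs]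
      have hb : b = a + (b - a) := by abel
      have hab : (inner ℝ a b : ℝ) = ‖a‖ ^ 2 + inner ℝ a (b - a) := by
        conv_lhs => rw [hb]
        rw [inner_add_right, real_inner_self_eq_norm_sq]
      have hbb : ‖b‖ ^ 2 = ‖a‖ ^ 2 + 2 * (inner ℝ a (b - a) : ℝ) + ‖b - a‖ ^ 2 := by
        conv_lhs => rw [hb]
        rw [norm_add_sq_real]
      rw [hinner, hnorm, hab, hbb] at hdesc
      nlinarith [hdesc]
    -- integrate
    have int1 : Integrable (fun ω => γ * η ^ 2 / 2 * ‖D k ω - f' (x k ω)‖ ^ 2) μ :=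
      (hint_err k hk1).const_mul _
    have int2 : Integrable (fun ω =>
        (γ * η ^ 2 - η) * (inner ℝ (f' (x k ω)) (D k ω - f' (x k ω)) : ℝ)) μ :=
      (hint_inner k hk1).const_mul _
    have int3 : Integrable (fun ω => η * (1 - η * γ / 2) * ‖f' (x k ω)‖ ^ 2) μ :=
      (hint_grad k hk1).const_mul _
    have int4 : Integrable (fun ω =>
        f (x k ω) - η * (1 - η * γ / 2) * ‖f' (x k ω)‖ ^ 2) μ := (hint_f k hkN1).sub int3
    have int5 : Integrable (fun ω =>
        f (x k ω) - η * (1 - η * γ / 2) * ‖f' (x k ω)‖ ^ 2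
          + (γ * η ^ 2 - η) * (inner ℝ (f' (x k ω)) (D k ω - f' (x k ω)) : ℝ)) μ :=
      int4.add int2
    have hintR : Integrable (fun ω =>
        f (x k ω) - η * (1 - η * γ / 2) * ‖f' (x k ω)‖ ^ 2
          + (γ * η ^ 2 - η) * (inner ℝ (f' (x k ω)) (D k ω - f' (x k ω)) : ℝ)
          + γ * η ^ 2 / 2 * ‖D k ω - f' (x k ω)‖ ^ 2) μ := int5.add int1
    have hle : F (k + 1) ≤ F k - η * (1 - η * γ / 2) * Gq k
        + (γ * η ^ 2 - η) * I k + γ * η ^ 2 / 2 * V k := by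
      have h1 : F (k + 1) ≤ ∫ ω, (f (x k ω) - η * (1 - η * γ / 2) * ‖f' (x k ω)‖ ^ 2
          + (γ * η ^ 2 - η) * (inner ℝ (f' (x k ω)) (D k ω - f' (x k ω)) : ℝ)
          + γ * η ^ 2 / 2 * ‖D k ω - f' (x k ω)‖ ^ 2) ∂μ :=
        integral_mono (hint_f (k + 1) hkN1') hintR hpt
      rw [integral_add int5 int1, integral_add int4 int2, integral_sub (hint_f k hkN1) int3,
          integral_const_mul, integral_const_mul, integral_const_mul] at h1
      exact h1
    have hIbd : (γ * η ^ 2 - η) * I k ≤ η * (1 - η * γ) * (η * G₀ + ρ ^ (k - 1) * G₀) := by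
      have h1 : (γ * η ^ 2 - η) * I k ≤ |(γ * η ^ 2 - η) * I k| := le_abs_self _
      have h2 : |(γ * η ^ 2 - η) * I k| = η * (1 - η * γ) * |I k| := by
        rw [abs_mul]
        have : |γ * η ^ 2 - η| = η * (1 - η * γ) := by
          rw [abs_of_nonpos (by nlinarith)]; ring
        rw [this]
      have h3 : |I k| ≤ η * G₀ + ρ ^ (k - 1) * G₀ := hbias k hk1
      have h4 : 0 ≤ η * (1 - η * γ) := by positivity
      nlinarith [h1, h2, h3, h4]
    have hVbd : γ * η ^ 2 / 2 * V k ≤ γ * η ^ 2 / 2 * G₀ := by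
      have := hvar k hk1
      have h4 : (0:ℝ) ≤ γ * η ^ 2 / 2 := by positivity
      exact mul_le_mul_of_nonneg_left this h4
    linarith
  -- sum over k
  set S : ℝ := ∑ k ∈ Icc 1 N, Gq k with hS
  have hsum : η * (1 - η * γ / 2) * S
      ≤ (F 1 - F (N + 1)) + (N : ℝ) * (η * (1 - η * γ) * (η * G₀)) +
        η * (1 - η * γ) * G₀ * (1 / (1 - ρ)) + (N : ℝ) * (γ * η ^ 2 / 2 * G₀) := by
    have h1 : η * (1 - η * γ / 2) * S = ∑ k ∈ Icc 1 N, η * (1 - η * γ / 2) * Gq k := by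
      rw [hS, Finset.mul_sum]
    have h2 : ∑ k ∈ Icc 1 N, η * (1 - η * γ / 2) * Gq k
        ≤ ∑ k ∈ Icc 1 N, (F k - F (k + 1) + η * (1 - η * γ) * (η * G₀ + ρ ^ (k - 1) * G₀)
          + γ * η ^ 2 / 2 * G₀) := Finset.sum_le_sum step
    have htel : ∑ k ∈ Icc 1 N, (F k - F (k + 1)) = F 1 - F (N + 1) := by
      have h0 : ∑ i ∈ Finset.range N, (F (i + 1) - F (i + 1 + 1)) = F 1 - F (N + 1) := by
        simpa using Finset.sum_range_sub' (fun i => F (i + 1)) N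
      rw [← Finset.Ico_add_one_right_eq_Icc, Finset.sum_Ico_eq_sum_range, ← h0]
      apply Finset.sum_congr rfl
      intro i _
      rw [show 1 + i = i + 1 from by omega]
    have hgeo : ∑ k ∈ Icc 1 N, (ρ : ℝ) ^ (k - 1) ≤ 1 / (1 - ρ) := by
      have he : ∑ k ∈ Icc 1 N, (ρ : ℝ) ^ (k - 1) = ∑ i ∈ Finset.range N, ρ ^ i := by
        rw [← Finset.Ico_add_one_right_eq_Icc, Finset.sum_Ico_eq_sum_range]
        apply Finset.sum_congr rfl
        intro i _
        congr 1
        omega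
      rw [he, geom_sum_eq (ne_of_lt hρ1) N]
      have h1 : (ρ ^ N - 1) / (ρ - 1) = (1 - ρ ^ N) / (1 - ρ) := by
        rw [div_eq_div_iff (by intro h; nlinarith [h]) (ne_of_gt hρ')]
        ring
      rw [h1]
      have h2 : (0:ℝ) ≤ ρ ^ N := pow_nonneg hρ0.le N
      gcongr
      linarith
    have hsplit : ∑ k ∈ Icc 1 N, (F k - F (k + 1) + η * (1 - η * γ) * (η * G₀ + ρ ^ (k - 1) * G₀)
          + γ * η ^ 2 / 2 * G₀)
        = (F 1 - F (N + 1)) + (N : ℝ) * (η * (1 - η * γ) * (η * G₀))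
          + η * (1 - η * γ) * G₀ * (∑ k ∈ Icc 1 N, (ρ : ℝ) ^ (k - 1))
          + (N : ℝ) * (γ * η ^ 2 / 2 * G₀) := by
      have hsum2 : ∑ k ∈ Icc 1 N, η * (1 - η * γ) * (η * G₀ + ρ ^ (k - 1) * G₀)
          = (N : ℝ) * (η * (1 - η * γ) * (η * G₀))
            + η * (1 - η * γ) * G₀ * (∑ k ∈ Icc 1 N, (ρ : ℝ) ^ (k - 1)) := by
        calc ∑ k ∈ Icc 1 N, η * (1 - η * γ) * (η * G₀ + ρ ^ (k - 1) * G₀)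
            = ∑ k ∈ Icc 1 N, (η * (1 - η * γ) * (η * G₀)
                + η * (1 - η * γ) * G₀ * ρ ^ (k - 1)) :=
              Finset.sum_congr rfl fun k _ => by ring
          _ = _ := by
              rw [Finset.sum_add_distrib, Finset.sum_const, ← Finset.mul_sum, Nat.card_Icc]
              simp [nsmul_eq_mul]
      rw [Finset.sum_add_distrib, Finset.sum_add_distrib, htel, hsum2, Finset.sum_const,
        Nat.card_Icc]
      simp [nsmul_eq_mul]
      ring
    have hgeo' : η * (1 - η * γ) * G₀ * (∑ k ∈ Icc 1 N, (ρ : ℝ) ^ (k - 1))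
        ≤ η * (1 - η * γ) * G₀ * (1 / (1 - ρ)) := by
      apply mul_le_mul_of_nonneg_left hgeo (by positivity)
    calc η * (1 - η * γ / 2) * S ≤ _ := h1.le.trans h2
      _ = _ := hsplit
      _ ≤ _ := by linarith
  -- F 1 = f x1, F (N+1) ≥ fstar
  have hF1 : F 1 = f x1 := by
    have he : (fun ω => f (x 1 ω)) = fun _ : Ω => f x1 := funext fun ω => by rw [hx1 ω]
    show (∫ ω, f (x 1 ω) ∂μ) = f x1
    rw [he, integral_const]
    simp
  have hFN : fstar ≤ F (N + 1) := by
    have h1 : fstar = ∫ _ : Ω, fstar ∂μ := by simp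
    rw [h1, hF]
    exact integral_mono (integrable_const _) (hint_f (N + 1) (Finset.mem_Icc.mpr ⟨by omega, le_rfl⟩))
      (fun ω => hlb _)
  set T : ℝ := f x1 - fstar with hT
  have hT0 : 0 ≤ T := by
    have := hlb x1; simp [hT]; linarith
  have key : η * (1 - η * γ / 2) * S
      ≤ T + (N : ℝ) * (η ^ 2 * (1 - η * γ) * G₀) + η * (1 - η * γ) * G₀ / (1 - ρ)
        + (N : ℝ) * (γ * η ^ 2 * G₀ / 2) := by
    have h1 : F 1 - F (N + 1) ≤ T := by rw [hF1, hT]; linarith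
    calc η * (1 - η * γ / 2) * S ≤ _ := hsum
      _ ≤ _ := by
          have e1 : (N : ℝ) * (η * (1 - η * γ) * (η * G₀)) = (N : ℝ) * (η ^ 2 * (1 - η * γ) * G₀) := by ring
          have e2 : η * (1 - η * γ) * G₀ * (1 / (1 - ρ)) = η * (1 - η * γ) * G₀ / (1 - ρ) := by ring
          have e3 : (N : ℝ) * (γ * η ^ 2 / 2 * G₀) = (N : ℝ) * (γ * η ^ 2 * G₀ / 2) := by ring
          rw [e1, e2, e3]; linarith
  -- final algebra
  have hS0 : 0 ≤ S := by
    apply Finset.sum_nonneg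
    intro k hk
    exact integral_nonneg fun ω => by positivity
  set Q : ℝ := T + (N : ℝ) * (η ^ 2 * (1 - η * γ) * G₀) + η * (1 - η * γ) * G₀ / (1 - ρ)
        + (N : ℝ) * (γ * η ^ 2 * G₀ / 2) with hQ
  have hden : (0:ℝ) < (N : ℝ) * η * (1 - η * γ / 2) := by positivity
  have h1 : (1 / (N : ℝ)) * S ≤ Q / ((N : ℝ) * η * (1 - η * γ / 2)) := by
    rw [le_div_iff₀ hden]
    have e : 1 / (N : ℝ) * S * ((N : ℝ) * η * (1 - η * γ / 2))
        = η * (1 - η * γ / 2) * S := by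
      field_simp
    rw [e]
    exact key
  refine h1.trans ?_
  have h2A : 2 - η * γ = 2 * (1 - η * γ / 2) := by ring
  have hsplitQ : Q / ((N : ℝ) * η * (1 - η * γ / 2))
      = T / ((N : ℝ) * η * (1 - η * γ / 2))
        + (N : ℝ) * (η ^ 2 * (1 - η * γ) * G₀) / ((N : ℝ) * η * (1 - η * γ / 2))
        + (η * (1 - η * γ) * G₀ / (1 - ρ)) / ((N : ℝ) * η * (1 - η * γ / 2))
        + (N : ℝ) * (γ * η ^ 2 * G₀ / 2) / ((N : ℝ) * η * (1 - η * γ / 2)) := by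
    rw [hQ]; ring
  rw [hsplitQ, hT]
  have h2' : (N : ℝ) * (η ^ 2 * (1 - η * γ) * G₀) / ((N : ℝ) * η * (1 - η * γ / 2))
      ≤ η * G₀ := by
    rw [div_le_iff₀ hden]
    nlinarith [mul_le_mul_of_nonneg_left hA1 (show (0:ℝ) ≤ (N : ℝ) * η ^ 2 * G₀ by positivity)]
  have h3' : (η * (1 - η * γ) * G₀ / (1 - ρ)) / ((N : ℝ) * η * (1 - η * γ / 2))
      ≤ G₀ / ((1 - ρ) * (N : ℝ)) := by
    rw [div_div, div_le_div_iff₀ (by positivity) (by positivity)]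
    nlinarith [mul_le_mul_of_nonneg_left hA1
      (show (0:ℝ) ≤ η * G₀ * (1 - ρ) * (N : ℝ) by positivity)]
  have h4' : (N : ℝ) * (γ * η ^ 2 * G₀ / 2) / ((N : ℝ) * η * (1 - η * γ / 2))
      ≤ η * γ * G₀ / (2 - η * γ) := by
    rw [div_le_div_iff₀ hden (by linarith : (0:ℝ) < 2 - η * γ)]
    apply le_of_eq
    ring
  exact add_le_add (add_le_add (add_le_add le_rfl h2') h3') h4'
end
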